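/- Let m ≥ 3 be odd, a, b : F_2^{m-1} → F_2 bent functions, and f(x,y) = 2a(x)(1+y) + 2b(x)y + y : F_2^m → Z_4. Let c_f ∈ Z_4^{2^m} be the truth table of f (values of f listed in lexicographic order of inputs). Then the Euclidean weight of c_f is divisible by 8, and consequently ⟨c_f, c_f⟩ = 0 in Z_4. -/

import Mathlib

open Finset

def nCount {n : ℕ} (x : Fin n → ZMod 4) (a : ZMod 4) : ℕ :=
  (Finset.univ.filter (fun i => x i = a)).card

def wtE {n : ℕ} (x : Fin n → ZMod 4) : ℕ :=
  nCount x 1 + 4 * nCount x 2 + nCount x 3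

def walsh {n : ℕ} (f : (Fin n → ZMod 2) → ZMod 2) (v : Fin n → ZMod 2) : ℤ :=
  ∑ x : Fin n → ZMod 2, (-1 : ℤ) ^ (f x + ∑ i : Fin n, v i * x i).val

def IsBent {n : ℕ} (f : (Fin n → ZMod 2) → ZMod 2) : Prop :=
  ∀ v, walsh f v = 2 ^ (n / 2) ∨ walsh f v = -(2 ^ (n / 2))

/-- the gbent construction `f(x,y) = 2a(x)(1+y) + 2b(x)y + y` with values in `Z_4` -/
def gfun {m : ℕ} (a b : (Fin (m - 1) → ZMod 2) → ZMod 2)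
    (z : (Fin (m - 1) → ZMod 2) × ZMod 2) : ZMod 4 :=
  2 * ((a z.1).val : ZMod 4) * (1 + ((z.2).val : ZMod 4)) +
    2 * ((b z.1).val : ZMod 4) * ((z.2).val : ZMod 4) + ((z.2).val : ZMod 4)

/-- the truth table of `gfun a b` as a vector in `Z_4^{2^m}`, inputs listed in
lexicographic order (first coordinate most significant, the bit `y` least significant). -/
def cf (m : ℕ) (a b : (Fin (m - 1) → ZMod 2) → ZMod 2) : Fin (2 ^ m) → ZMod 4 :=
  fun k =>
    gfun a b
      (fun j : Fin (m - 1) => if Nat.testBit k.val (m - 1 - (j : ℕ)) then 1 else 0,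
       if Nat.testBit k.val 0 then 1 else 0)

/-! ### auxiliary lemmas -/

lemma zmod2_cases (z : ZMod 2) : z = 0 ∨ z = 1 := by revert z; decide

lemma gfun_eq_one {m : ℕ} (a b : (Fin (m - 1) → ZMod 2) → ZMod 2)
    (x : Fin (m-1) → ZMod 2) (y : ZMod 2) :
    gfun a b (x, y) = 1 ↔ (y = 1 ∧ b x = 0) := by
  rcases zmod2_cases y with hy | hy <;>
  rcases zmod2_cases (a x) with h1 | h1 <;>
  rcases zmod2_cases (b x) with h2 | h2 <;>
    simp [gfun, hy, h1, h2] <;> decide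

lemma gfun_eq_three {m : ℕ} (a b : (Fin (m - 1) → ZMod 2) → ZMod 2)
    (x : Fin (m-1) → ZMod 2) (y : ZMod 2) :
    gfun a b (x, y) = 3 ↔ (y = 1 ∧ b x = 1) := by
  rcases zmod2_cases y with hy | hy <;>
  rcases zmod2_cases (a x) with h1 | h1 <;>
  rcases zmod2_cases (b x) with h2 | h2 <;>
    simp [gfun, hy, h1, h2] <;> decide

lemma gfun_eq_two {m : ℕ} (a b : (Fin (m - 1) → ZMod 2) → ZMod 2)
    (x : Fin (m-1) → ZMod 2) (y : ZMod 2) :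
    gfun a b (x, y) = 2 ↔ (y = 0 ∧ a x = 1) := by
  rcases zmod2_cases y with hy | hy <;>
  rcases zmod2_cases (a x) with h1 | h1 <;>
  rcases zmod2_cases (b x) with h2 | h2 <;>
    simp [gfun, hy, h1, h2] <;> decide

def Fmap (m : ℕ) (k : Fin (2 ^ m)) : (Fin (m - 1) → ZMod 2) × ZMod 2 :=
  (fun j : Fin (m - 1) => if Nat.testBit k.val (m - 1 - (j : ℕ)) then 1 else 0,
   if Nat.testBit k.val 0 then 1 else 0)

lemma ite_inj {P Q : Prop} [Decidable P] [Decidable Q]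
    (h : (if P then (1:ZMod 2) else 0) = (if Q then 1 else 0)) : P ↔ Q := by
  split_ifs at h <;> simp_all

lemma Fmap_bijective (m : ℕ) (hm3 : 3 ≤ m) : Function.Bijective (Fmap m) := by
  rw [Fintype.bijective_iff_injective_and_card]
  constructor
  · intro k k' h
    have h1 := congrArg Prod.fst h
    have h2 := ite_inj (congrArg Prod.snd h)
    ext
    apply Nat.eq_of_testBit_eq
    intro i
    rcases lt_trichotomy i m with hi | hi | hi
    · rcases Nat.eq_zero_or_pos i with rfl | hi0
      · simpa using h2
      · have hj : m - 1 - i < m - 1 := by omega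
        have := ite_inj (congrFun h1 ⟨m - 1 - i, hj⟩)
        have hmi : m - 1 - (m - 1 - i) = i := by omega
        simpa [hmi] using this
    · subst hi
      rw [Nat.testBit_lt_two_pow k.isLt, Nat.testBit_lt_two_pow k'.isLt]
    · have : 2 ^ m ≤ 2 ^ i := Nat.pow_le_pow_right (by norm_num) (le_of_lt hi)
      rw [Nat.testBit_lt_two_pow (lt_of_lt_of_le k.isLt this),
        Nat.testBit_lt_two_pow (lt_of_lt_of_le k'.isLt this)]
  · simp [ZMod.card]
    rw [← pow_succ]
    congr 1
    omega

lemma card_filter_comp {α β : Type*} [Fintype α] [Fintype β] [DecidableEq β]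
    (F : α → β) (hF : Function.Bijective F) (p : β → Prop) [DecidablePred p] :
    (univ.filter fun x => p (F x)).card = (univ.filter p).card := by
  apply Finset.card_bij (fun x _ => F x)
  · intro x hx; simp only [mem_filter, mem_univ, true_and] at hx ⊢; exact hx
  · intro x _ x' _ h; exact hF.1 h
  · intro y hy
    obtain ⟨x, rfl⟩ := hF.2 y
    exact ⟨x, by simpa using hy, rfl⟩

lemma card_filter_prod {α : Type*} [Fintype α] [DecidableEq α]
    (p : α → Prop) [DecidablePred p] (c : ZMod 2) :
    (univ.filter fun z : α × ZMod 2 => z.2 = c ∧ p z.1).card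
      = (univ.filter p).card := by
  have : (univ.filter fun z : α × ZMod 2 => z.2 = c ∧ p z.1)
      = (univ.filter p) ×ˢ (univ.filter fun y : ZMod 2 => y = c) := by
    ext z
    simp [Finset.mem_product, and_comm]
  rw [this, Finset.card_product, Finset.filter_eq']
  simp

lemma walsh_zero {n : ℕ} (f : (Fin n → ZMod 2) → ZMod 2) :
    walsh f 0 = ((univ.filter fun x => f x = 0).card : ℤ)
      - ((univ.filter fun x => f x = 1).card : ℤ) := by
  have h : ∀ x : Fin n → ZMod 2, ((-1 : ℤ)) ^ (f x + ∑ i : Fin n, (0 : ZMod 2) * x i).val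
      = if f x = 0 then 1 else -1 := by
    intro x
    rcases zmod2_cases (f x) with h | h <;> simp [h, ZMod.val_one]
  unfold walsh
  simp only [Pi.zero_apply]
  rw [Finset.sum_congr rfl fun x _ => h x, Finset.sum_ite, Finset.sum_const, Finset.sum_const]
  have : (univ.filter fun x => ¬ f x = 0) = (univ.filter fun x => f x = 1) := by
    ext x
    rcases zmod2_cases (f x) with h | h <;> simp [h]
  rw [this]
  ring

lemma count_total {n : ℕ} (f : (Fin n → ZMod 2) → ZMod 2) :
    (univ.filter fun x => f x = 0).card + (univ.filter fun x => f x = 1).card = 2 ^ n := by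
  have h := Finset.card_filter_add_card_filter_not (s := (univ : Finset (Fin n → ZMod 2)))
    (p := fun x => f x = 0)
  have heq : (univ.filter fun x => ¬ f x = 0) = (univ.filter fun x => f x = 1) := by
    ext x
    rcases zmod2_cases (f x) with h | h <;> simp [h]
  rw [heq] at h
  rw [h, Finset.card_univ]
  simp [ZMod.card]

theorem cf_euclidean_weight_div_eight {m : ℕ} (hm : Odd m) (hm3 : 3 ≤ m)
    (a b : (Fin (m - 1) → ZMod 2) → ZMod 2) (ha : IsBent a) (hb : IsBent b) :
    8 ∣ wtE (cf m a b) ∧ ∑ i : Fin (2 ^ m), cf m a b i * cf m a b i = 0 := by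
  obtain ⟨t, ht⟩ := hm
  have ht1 : 1 ≤ t := by omega
  -- counts over pairs
  have hcount : ∀ c : ZMod 4, nCount (cf m a b) c
      = (univ.filter fun p : (Fin (m-1) → ZMod 2) × ZMod 2 => gfun a b p = c).card := by
    intro c
    exact card_filter_comp (Fmap m) (Fmap_bijective m hm3) (fun p => gfun a b p = c)
  set N0a := (univ.filter fun x : Fin (m-1) → ZMod 2 => a x = 0).card with hN0a
  set N1a := (univ.filter fun x : Fin (m-1) → ZMod 2 => a x = 1).card with hN1a
  set N0b := (univ.filter fun x : Fin (m-1) → ZMod 2 => b x = 0).card with hN0b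
  set N1b := (univ.filter fun x : Fin (m-1) → ZMod 2 => b x = 1).card with hN1b
  have h1 : nCount (cf m a b) 1 = N0b := by
    rw [hcount]
    have : (univ.filter fun p : (Fin (m-1) → ZMod 2) × ZMod 2 => gfun a b p = 1)
        = (univ.filter fun p : (Fin (m-1) → ZMod 2) × ZMod 2 => p.2 = 1 ∧ b p.1 = 0) := by
      ext ⟨x, y⟩
      simp [gfun_eq_one]
    rw [this]
    exact card_filter_prod (fun x => b x = 0) 1
  have h3 : nCount (cf m a b) 3 = N1b := by
    rw [hcount]
    have : (univ.filter fun p : (Fin (m-1) → ZMod 2) × ZMod 2 => gfun a b p = 3)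
        = (univ.filter fun p : (Fin (m-1) → ZMod 2) × ZMod 2 => p.2 = 1 ∧ b p.1 = 1) := by
      ext ⟨x, y⟩
      simp [gfun_eq_three]
    rw [this]
    exact card_filter_prod (fun x => b x = 1) 1
  have h2 : nCount (cf m a b) 2 = N1a := by
    rw [hcount]
    have : (univ.filter fun p : (Fin (m-1) → ZMod 2) × ZMod 2 => gfun a b p = 2)
        = (univ.filter fun p : (Fin (m-1) → ZMod 2) × ZMod 2 => p.2 = 0 ∧ a p.1 = 1) := by
      ext ⟨x, y⟩
      simp [gfun_eq_two]
    rw [this]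
    exact card_filter_prod (fun x => a x = 1) 0
  have hpow : 2 ^ (m - 1) = 2 ^ (2 * t) := by congr 1; omega
  have htotb : N0b + N1b = 2 ^ (2 * t) := (count_total b).trans hpow
  have htota : N0a + N1a = 2 ^ (2 * t) := (count_total a).trans hpow
  have hwt : wtE (cf m a b) = 2 ^ (2 * t) + 4 * N1a := by
    unfold wtE
    rw [h1, h2, h3]
    omega
  -- walsh value
  have hdiv2 : (m - 1) / 2 = t := by omega
  have hwa := ha 0
  rw [walsh_zero, hdiv2] at hwa
  constructor
  · -- divisibility
    have key : ((8:ℕ):ℤ) ∣ ((wtE (cf m a b) : ℕ) : ℤ) := by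
      have hw : ((wtE (cf m a b) : ℕ) : ℤ) = (2:ℤ) ^ (2*t) + 4 * (N1a : ℤ) := by
        rw [hwt]; push_cast; ring
      have htotaZ : (N0a : ℤ) + N1a = 2 ^ (2 * t) := by exact_mod_cast htota
      rcases hwa with hε | hε
      · -- N0a - N1a = 2^t
        have hN : (2:ℤ) * N1a = 2 ^ (2*t) - 2 ^ t := by linarith
        have hw2 : ((wtE (cf m a b) : ℕ) : ℤ) = 3 * 2 ^ (2*t) - 2 ^ (t+1) := by
          rw [hw]
          have : (4:ℤ) * N1a = 2 * (2 ^ (2*t) - 2 ^ t) := by linarith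
          rw [this]; ring
        rw [hw2]
        obtain ⟨s, rfl⟩ : ∃ s, t = s + 1 := ⟨t - 1, by omega⟩
        rcases Nat.eq_zero_or_pos s with rfl | hs
        · norm_num
        · obtain ⟨r, rfl⟩ : ∃ r, s = r + 1 := ⟨s - 1, by omega⟩
          refine ⟨3 * 2 ^ (2*r+1) - 2 ^ r, ?_⟩
          push_cast
          ring
      · have hN : (2:ℤ) * N1a = 2 ^ (2*t) + 2 ^ t := by linarith
        have hw2 : ((wtE (cf m a b) : ℕ) : ℤ) = 3 * 2 ^ (2*t) + 2 ^ (t+1) := by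
          rw [hw]
          have : (4:ℤ) * N1a = 2 * (2 ^ (2*t) + 2 ^ t) := by linarith
          rw [this]; ring
        rw [hw2]
        obtain ⟨s, rfl⟩ : ∃ s, t = s + 1 := ⟨t - 1, by omega⟩
        rcases Nat.eq_zero_or_pos s with rfl | hs
        · norm_num
        · obtain ⟨r, rfl⟩ : ∃ r, s = r + 1 := ⟨s - 1, by omega⟩
          refine ⟨3 * 2 ^ (2*r+1) + 2 ^ r, ?_⟩
          push_cast
          ring
    exact_mod_cast key
  · -- inner product zero
    have hsq : ∀ z : ZMod 4, z * z = if z = 1 ∨ z = 3 then 1 else 0 := by decide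
    calc ∑ i : Fin (2 ^ m), cf m a b i * cf m a b i
        = ∑ i : Fin (2 ^ m), if cf m a b i = 1 ∨ cf m a b i = 3 then (1 : ZMod 4) else 0 := by
          exact Finset.sum_congr rfl fun i _ => hsq _
      _ = ((univ.filter fun i : Fin (2^m) => cf m a b i = 1 ∨ cf m a b i = 3).card : ZMod 4) := by
          rw [Finset.sum_boole]
      _ = ((nCount (cf m a b) 1 + nCount (cf m a b) 3 : ℕ) : ZMod 4) := by
          congr 1
          rw [Finset.filter_or]
          rw [Finset.card_union_of_disjoint]
          · rfl
          · rw [Finset.disjoint_filter]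
            intro i _ hi
            rw [hi]
            decide
      _ = ((2 ^ (2*t) : ℕ) : ZMod 4) := by rw [h1, h3, htotb]
      _ = 0 := by
          obtain ⟨s, rfl⟩ : ∃ s, t = s + 1 := ⟨t - 1, by omega⟩
          have : 2 ^ (2 * (s+1)) = 4 * 2 ^ (2*s) := by ring
          rw [this]
          push_cast
          rw [show (4:ZMod 4) = 0 by decide]
          simp
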